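/- If R is a rigid subcategory of a Krull-Schmidt triangulated category C (i.e. Hom(R, R[1]) = 0), then the subcategory R * R[1] is closed under direct sums, direct summands and isomorphisms. -/

import Mathlib

open CategoryTheory CategoryTheory.Limits CategoryTheory.Pretriangulated

universe v u w

namespace RelCT

/-- Krull–Schmidt: every object decomposes as a finite biproduct of objects with local
endomorphism rings. -/
def KrullSchmidtCat (C : Type u) [Category.{v} C] [Preadditive C] : Prop :=
  ∀ X : C, ∃ (n : ℕ) (f : Fin n → C) (p : ∀ i, X ⟶ f i) (ι : ∀ i, f i ⟶ X),
    (∀ i, ι i ≫ p i = 𝟙 (f i)) ∧ (∑ i, p i ≫ ι i) = 𝟙 X ∧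
    ∀ i (φ : f i ⟶ f i), IsIso φ ∨ IsIso (𝟙 (f i) - φ)

/-- `Fac W`: objects admitting an epimorphism from an object of `W`. -/
def FacSet {Q : Type w} [Category Q] (W : Set Q) : Set Q :=
  {Y | ∃ X ∈ W, ∃ p : X ⟶ Y, Epi p}

/-- `Ext¹(X, F) = 0`, expressed as: every short exact sequence
`0 → F → E → X → 0` splits. -/
def Ext1Zero {Q : Type w} [Category Q] [Abelian Q] (X F : Q) : Prop :=
  ∀ S : CategoryTheory.ShortComplex Q, S.ShortExact → (S.X₁ ≅ F) → (S.X₃ ≅ X) →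
    ∃ r : S.X₂ ⟶ S.X₁, S.f ≫ r = 𝟙 S.X₁

variable {C : Type u} [Category.{v} C] [Preadditive C] [HasZeroObject C]
  [HasShift C ℤ] [∀ n : ℤ, (CategoryTheory.shiftFunctor C n).Additive] [Pretriangulated C]

/-- The shift `D[n]` of a collection of objects, closed under isomorphism. -/
def shiftSet (D : Set C) (n : ℤ) : Set C :=
  {X | ∃ Y ∈ D, Nonempty (X ≅ Y⟦n⟧)}

/-- `f` factors through an object of `D`. -/
def Factors (D : Set C) {A B : C} (f : A ⟶ B) : Prop :=
  ∃ (Z : C) (g : A ⟶ Z) (h : Z ⟶ B), Z ∈ D ∧ f = g ≫ h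

/-- `X * Y`: objects `M` admitting a distinguished triangle `A → M → B → A[1]`
with `A ∈ X`, `B ∈ Y`. -/
def star (X Y : Set C) : Set C :=
  {M | ∃ (A B : C) (f : A ⟶ M) (g : M ⟶ B) (h : B ⟶ A⟦(1:ℤ)⟧),
    A ∈ X ∧ B ∈ Y ∧ (Triangle.mk f g h ∈ distTriang C)}

/-- `R` is rigid: `Hom(R, R[1]) = 0`. -/
def Rigid (R : Set C) : Prop :=
  ∀ ⦃A B : C⦄, A ∈ R → B ∈ R → ∀ f : A ⟶ B⟦(1:ℤ)⟧, f = 0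

/-- `[R[1]](X, Y[1]) = 0` : every morphism from an object of `X` to a first shift of
an object of `Y` which factors through `R[1]` vanishes. -/
def RelRigid (R X Y : Set C) : Prop :=
  ∀ ⦃A B : C⦄, A ∈ X → B ∈ Y → ∀ f : A ⟶ B⟦(1:ℤ)⟧, Factors (shiftSet R 1) f → f = 0

/-- Closure of a collection of objects under finite direct sums and direct summands. -/
inductive addClosure (D : Set C) : C → Prop
  | of {X : C} : X ∈ D → addClosure D X
  | zero {X : C} : IsZero X → addClosure D X
  | sum {X Y Z : C} : addClosure D X → addClosure D Y →
      (∃ (pX : Z ⟶ X) (pY : Z ⟶ Y) (iX : X ⟶ Z) (iY : Y ⟶ Z),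
        iX ≫ pX = 𝟙 X ∧ iY ≫ pY = 𝟙 Y ∧ pX ≫ iX + pY ≫ iY = 𝟙 Z) →
      addClosure D Z
  | smd {X Y : C} : addClosure D Y → (∃ (s : X ⟶ Y) (r : Y ⟶ X), s ≫ r = 𝟙 X) →
      addClosure D X

/-- `D` is closed under finite direct sums and direct summands. -/
def AddClosed (D : Set C) : Prop := ∀ X : C, addClosure D X → X ∈ D

/-- closed under direct sums (expressed via biproduct data). -/
def SumClosed (D : Set C) : Prop :=
  ∀ ⦃X Y Z : C⦄, X ∈ D → Y ∈ D →
    (∃ (pX : Z ⟶ X) (pY : Z ⟶ Y) (iX : X ⟶ Z) (iY : Y ⟶ Z),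
      iX ≫ pX = 𝟙 X ∧ iY ≫ pY = 𝟙 Y ∧ pX ≫ iX + pY ≫ iY = 𝟙 Z) → Z ∈ D

/-- closed under direct summands. -/
def SummandClosed (D : Set C) : Prop :=
  ∀ ⦃X Y : C⦄, Y ∈ D → (∃ (s : X ⟶ Y) (r : Y ⟶ X), s ≫ r = 𝟙 X) → X ∈ D

/-- closed under isomorphisms. -/
def IsoClosed (D : Set C) : Prop :=
  ∀ ⦃X Y : C⦄, X ∈ D → Nonempty (X ≅ Y) → Y ∈ D

/-- `f : A ⟶ X` is a left `D`-approximation of `A`. -/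
def IsLeftApprox (D : Set C) {A X : C} (f : A ⟶ X) : Prop :=
  X ∈ D ∧ ∀ ⦃X' : C⦄, X' ∈ D → ∀ g : A ⟶ X', ∃ h : X ⟶ X', f ≫ h = g

/-- `f : X ⟶ A` is a right `D`-approximation of `A`. -/
def IsRightApprox (D : Set C) {X A : C} (f : X ⟶ A) : Prop :=
  X ∈ D ∧ ∀ ⦃X' : C⦄, X' ∈ D → ∀ g : X' ⟶ A, ∃ h : X' ⟶ X, h ≫ f = g

/-- `f` is left minimal. -/
def LeftMinimal {A B : C} (f : A ⟶ B) : Prop :=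
  ∀ u : B ⟶ B, f ≫ u = f → IsIso u

/-- `f` is right minimal. -/
def RightMinimal {A B : C} (f : A ⟶ B) : Prop :=
  ∀ u : A ⟶ A, u ≫ f = f → IsIso u

/-- `f` lies in the Jacobson radical of the category. -/
def InRadical {A B : C} (f : A ⟶ B) : Prop :=
  ∀ g : B ⟶ A, IsIso (𝟙 A - f ≫ g)

/-- indecomposable object. -/
def Indec (W : C) : Prop :=
  ¬ IsZero W ∧ ∀ p : W ⟶ W, p ≫ p = p → p = 0 ∨ p = 𝟙 W

/-- two-term `R[1]`-rigid subcategory. -/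
def TwoTermRigid (R X : Set C) : Prop :=
  RelRigid R X X ∧ X ⊆ star R (shiftSet R 1)

/-- two-term maximal `R[1]`-rigid subcategory. -/
def TwoTermMaximal (R X : Set C) : Prop :=
  TwoTermRigid R X ∧
  ∀ M ∈ star R (shiftSet R 1),
    RelRigid R {Z | addClosure (insert M X) Z} {Z | addClosure (insert M X) Z} → M ∈ X

/-- two-term weak `R[1]`-cluster tilting subcategory. -/
def TwoTermWCT (R X : Set C) : Prop :=
  X ⊆ star R (shiftSet R 1) ∧ R ⊆ star (shiftSet X (-1)) X ∧
  ∀ M : C, M ∈ X ↔ (M ∈ star R (shiftSet R 1) ∧ RelRigid R {M} X ∧ RelRigid R X {M})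

/-- `R(X) = { R₀ ∈ R | Hom(R₀, X) = 0 }`. -/
def RZero (R X : Set C) : Set C :=
  {A | A ∈ R ∧ ∀ B ∈ X, ∀ f : A ⟶ B, f = 0}

/-- `X` is `R[1]`-functorially finite. -/
def RFunctoriallyFinite (R X : Set C) : Prop :=
  (∀ R₀ ∈ R, ∃ (X₀ : C) (f : R₀ ⟶ X₀), IsLeftApprox X f) ∧
  (∀ A ∈ shiftSet R 1, ∃ (X₀ : C) (f : X₀ ⟶ A), IsRightApprox X f)

/-- Data of triangles `R₀ → X^{R₀} → V^{R₀} → R₀[1]` with minimal left `X`-approximations,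
defining the completion `M_X`. -/
structure MData (R X : Set C) where
  obj : ∀ R₀ : C, R₀ ∈ R → C
  cone : ∀ R₀ : C, R₀ ∈ R → C
  f : ∀ (R₀ : C) (h : R₀ ∈ R), R₀ ⟶ obj R₀ h
  g : ∀ (R₀ : C) (h : R₀ ∈ R), obj R₀ h ⟶ cone R₀ h
  w : ∀ (R₀ : C) (h : R₀ ∈ R), cone R₀ h ⟶ R₀⟦(1:ℤ)⟧
  tri : ∀ (R₀ : C) (h : R₀ ∈ R), Triangle.mk (f R₀ h) (g R₀ h) (w R₀ h) ∈ distTriang C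
  approx : ∀ (R₀ : C) (h : R₀ ∈ R), IsLeftApprox X (f R₀ h)
  minimal : ∀ (R₀ : C) (h : R₀ ∈ R), LeftMinimal (f R₀ h)

/-- `M_X = add (X ∪ {V^R | R ∈ R})`. -/
def MData.cat {R X : Set C} (d : MData R X) : Set C :=
  {Z | addClosure (X ∪ {V | ∃ (R₀ : C) (h : R₀ ∈ R), V = d.cone R₀ h}) Z}

/-- Data of triangles `R₀ → V_{R₀} → U_{R₀} → R₀[1]` with the last map a right
`X`-approximation, defining the completion `N_X`. -/
structure NData (R X : Set C) where
  cocone : ∀ R₀ : C, R₀ ∈ R → C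
  obj : ∀ R₀ : C, R₀ ∈ R → C
  a : ∀ (R₀ : C) (h : R₀ ∈ R), R₀ ⟶ cocone R₀ h
  b : ∀ (R₀ : C) (h : R₀ ∈ R), cocone R₀ h ⟶ obj R₀ h
  c : ∀ (R₀ : C) (h : R₀ ∈ R), obj R₀ h ⟶ R₀⟦(1:ℤ)⟧
  tri : ∀ (R₀ : C) (h : R₀ ∈ R), Triangle.mk (a R₀ h) (b R₀ h) (c R₀ h) ∈ distTriang C
  approx : ∀ (R₀ : C) (h : R₀ ∈ R), IsRightApprox X (c R₀ h)

/-- `N_X = add (X ∪ {V_R | R ∈ R})`. -/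
def NData.cat {R X : Set C} (d : NData R X) : Set C :=
  {Z | addClosure (X ∪ {V | ∃ (R₀ : C) (h : R₀ ∈ R), V = d.cocone R₀ h}) Z}

/-- `(M, N)` is an `X`-mutation pair. -/
def MutationPair (R X M N : Set C) : Prop :=
  M ≠ N ∧ TwoTermWCT R M ∧ TwoTermWCT R N ∧ X ⊆ M ∧ X ⊆ N ∧
  (∀ Y ∈ M, ∃ (Z X₀ : C) (z : Z ⟶ X₀) (x : X₀ ⟶ Y) (y : Y ⟶ Z⟦(1:ℤ)⟧),
      Z ∈ N ∧ X₀ ∈ X ∧ (Triangle.mk z x y ∈ distTriang C) ∧ Factors (shiftSet R 1) y) ∧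
  (∀ Z' ∈ N, ∃ (X' Y' : C) (z' : Z' ⟶ X') (x' : X' ⟶ Y') (y' : Y' ⟶ Z'⟦(1:ℤ)⟧),
      X' ∈ X ∧ Y' ∈ M ∧ (Triangle.mk z' x' y' ∈ distTriang C) ∧ Factors (shiftSet R 1) y')

/-- almost complete two-term weak `R[1]`-cluster tilting subcategory. -/
def AlmostComplete (R X : Set C) : Prop :=
  TwoTermRigid R X ∧ RFunctoriallyFinite R X ∧
    ∃ W : C, Indec W ∧ W ∉ X ∧ TwoTermWCT R {Z | addClosure (insert W X) Z}

/-- completion of an almost complete subcategory `X`. -/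
def IsCompletion (R X U : Set C) : Prop :=
  TwoTermWCT R U ∧ ∃ W : C, Indec W ∧ W ∉ X ∧ U = {Z | addClosure (insert W X) Z}


section Aux

set_option linter.unusedSectionVars false

variable {C : Type u} [Category.{v} C] [Preadditive C] [HasZeroObject C]
  [HasShift C ℤ] [∀ n : ℤ, (CategoryTheory.shiftFunctor C n).Additive] [Pretriangulated C]

open ZeroObject

/-- local endomorphism ring property coming from `KrullSchmidtCat`. -/
def LocEnd (F : C) : Prop := ∀ φ : F ⟶ F, IsIso φ ∨ IsIso (𝟙 F - φ)

lemma isIso_of_id_zero {F : C} (h : 𝟙 F = 0) (φ : F ⟶ F) : IsIso φ :=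
  ⟨0, by rw [comp_zero, h], by rw [zero_comp, h]⟩

lemma id_ne_zero_of_not_isIso {F : C} {φ : F ⟶ F} (h : ¬ IsIso φ) : 𝟙 F ≠ 0 :=
  fun h0 => h (isIso_of_id_zero h0 φ)

lemma isIso_of_section_locEnd {P Q : C} (hQ : LocEnd Q) (g : P ⟶ Q) (k : Q ⟶ P)
    (hgk : g ≫ k = 𝟙 P) (hP : 𝟙 P ≠ 0) : IsIso g := by
  rcases hQ (k ≫ g) with h | h
  · have he : (k ≫ g) ≫ (k ≫ g) = (k ≫ g) ≫ 𝟙 Q := by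
      rw [Category.comp_id, Category.assoc, ← Category.assoc g k, hgk, Category.id_comp]
    have hkg : k ≫ g = 𝟙 Q := by
      have := h
      rwa [cancel_epi (k ≫ g)] at he
    exact ⟨k, hgk, hkg⟩
  · exfalso
    have hg0 : g ≫ (𝟙 Q - k ≫ g) = 0 := by
      rw [Preadditive.comp_sub, Category.comp_id, ← Category.assoc, hgk, Category.id_comp,
        sub_self]
    have hg : g = 0 := by
      calc g = (g ≫ (𝟙 Q - k ≫ g)) ≫ inv (𝟙 Q - k ≫ g) := by
              rw [Category.assoc, IsIso.hom_inv_id, Category.comp_id]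
        _ = 0 := by rw [hg0, zero_comp]
    exact hP (by rw [← hgk, hg, zero_comp])

lemma not_isIso_comp_left {P Q T : C} (hQ : LocEnd Q) {g : P ⟶ Q} (hg : ¬ IsIso g)
    (hP : 𝟙 P ≠ 0) (ψ : Q ⟶ T) : ¬ IsIso (g ≫ ψ) := by
  intro h
  exact hg (isIso_of_section_locEnd hQ g (ψ ≫ inv (g ≫ ψ))
    (by rw [← Category.assoc, IsIso.hom_inv_id]) hP)

lemma not_isIso_add {P Q : C} (hP : LocEnd P) {f g : P ⟶ Q} (hQ : LocEnd Q)
    (hf : ¬ IsIso f) (hg : ¬ IsIso g) (h1 : 𝟙 P ≠ 0) : ¬ IsIso (f + g) := by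
  intro h
  have hsum : f ≫ inv (f + g) + g ≫ inv (f + g) = 𝟙 P := by
    rw [← Preadditive.add_comp, IsIso.hom_inv_id]
  rcases hP (f ≫ inv (f + g)) with h' | h'
  · exact hf (isIso_of_section_locEnd hQ f (inv (f + g) ≫ inv (f ≫ inv (f + g)))
      (by rw [← Category.assoc, IsIso.hom_inv_id]) h1)
  · have h'' : IsIso (g ≫ inv (f + g)) := by
      have heq : 𝟙 P - f ≫ inv (f + g) = g ≫ inv (f + g) := by
        rw [← hsum]; abel
      rwa [heq] at h'
    exact hg (isIso_of_section_locEnd hQ g (inv (f + g) ≫ inv (g ≫ inv (f + g)))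
      (by rw [← Category.assoc, IsIso.hom_inv_id]) h1)

set_option maxHeartbeats 1000000 in
/-- Gaussian elimination / Schur complement: a 2×2 matrix with invertible upper-left
corner and invertible Schur complement is invertible. -/
lemma isIso_binaryMatrix {P Q : C} (A : P ⟶ P) (B : P ⟶ Q) (Cm : Q ⟶ P) (D : Q ⟶ Q)
    [hA : IsIso A] (hS : IsIso (D - Cm ≫ inv A ≫ B)) :
    IsIso (biprod.desc (biprod.lift A B) (biprod.lift Cm D)) := by
  haveI := hS
  have hDw : D ≫ inv (D - Cm ≫ inv A ≫ B)
      = 𝟙 Q + Cm ≫ inv A ≫ B ≫ inv (D - Cm ≫ inv A ≫ B) := by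
    have h0 := IsIso.hom_inv_id (D - Cm ≫ inv A ≫ B)
    rw [Preadditive.sub_comp] at h0
    simp only [Category.assoc] at h0
    rw [← h0]; abel
  have hwD : inv (D - Cm ≫ inv A ≫ B) ≫ D
      = 𝟙 Q + inv (D - Cm ≫ inv A ≫ B) ≫ Cm ≫ inv A ≫ B := by
    have h0 := IsIso.inv_hom_id (D - Cm ≫ inv A ≫ B)
    rw [Preadditive.comp_sub] at h0
    try simp only [Category.assoc] at h0
    rw [← h0]; abel
  refine ⟨biprod.desc
      (biprod.lift (inv A + inv A ≫ B ≫ inv (D - Cm ≫ inv A ≫ B) ≫ Cm ≫ inv A)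
        (-(inv A ≫ B ≫ inv (D - Cm ≫ inv A ≫ B))))
      (biprod.lift (-(inv (D - Cm ≫ inv A ≫ B) ≫ Cm ≫ inv A))
        (inv (D - Cm ≫ inv A ≫ B))), ?_, ?_⟩ <;>
    apply biprod.hom_ext' <;> apply biprod.hom_ext <;>
    simp only [biprod.inl_desc_assoc, biprod.inr_desc_assoc, biprod.lift_desc,
      Preadditive.comp_add, Preadditive.add_comp, Preadditive.comp_neg, Preadditive.neg_comp,
      Category.assoc, biprod.lift_fst, biprod.lift_snd, Category.comp_id, Category.id_comp,
      biprod.inl_fst, biprod.inl_snd, biprod.inr_fst, biprod.inr_snd,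
      IsIso.hom_inv_id, IsIso.inv_hom_id, IsIso.hom_inv_id_assoc, IsIso.inv_hom_id_assoc,
      hDw, reassoc_of% hDw, hwD, reassoc_of% hwD] <;>
    abel

/-- Iterated binary biproduct of a finite family. -/
@[reducible] noncomputable def sumObj : ∀ (n : ℕ), (Fin n → C) → C :=
  fun n => Nat.rec (motive := fun k => (Fin k → C) → C) (fun _ => (0 : C))
    (fun _ ih f => f 0 ⊞ ih (fun i => f i.succ)) n

noncomputable def sumι : ∀ (n : ℕ) (f : Fin n → C) (i : Fin n), f i ⟶ sumObj n f
  | 0, _, i => i.elim0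
  | (n + 1), f, i =>
      Fin.cases (biprod.inl : f 0 ⟶ sumObj (n + 1) f)
        (fun k => sumι n (fun i => f i.succ) k ≫ biprod.inr) i

noncomputable def sumπ : ∀ (n : ℕ) (f : Fin n → C) (i : Fin n), sumObj n f ⟶ f i
  | 0, _, i => i.elim0
  | (n + 1), f, i =>
      Fin.cases ((biprod.fst : sumObj (n + 1) f ⟶ f 0))
        (fun k => biprod.snd ≫ sumπ n (fun i => f i.succ) k) i

@[simp] lemma sumι_zero (n : ℕ) (f : Fin (n + 1) → C) :
    sumι (n + 1) f 0 = (biprod.inl : f 0 ⟶ sumObj (n+1) f) := by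
  simp [sumι]

@[simp] lemma sumι_succ (n : ℕ) (f : Fin (n + 1) → C) (k : Fin n) :
    sumι (n + 1) f k.succ = sumι n (fun i => f i.succ) k ≫ biprod.inr := by
  simp [sumι]

@[simp] lemma sumπ_zero (n : ℕ) (f : Fin (n + 1) → C) :
    sumπ (n + 1) f 0 = (biprod.fst : sumObj (n+1) f ⟶ f 0) := by
  simp [sumπ]

@[simp] lemma sumπ_succ (n : ℕ) (f : Fin (n + 1) → C) (k : Fin n) :
    sumπ (n + 1) f k.succ = biprod.snd ≫ sumπ n (fun i => f i.succ) k := by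
  simp [sumπ]

lemma sumι_π_same : ∀ (n : ℕ) (f : Fin n → C) (i : Fin n),
    sumι n f i ≫ sumπ n f i = 𝟙 (f i)
  | 0, _, i => i.elim0
  | (n + 1), f, i => by
      induction i using Fin.cases with
      | zero => simp
      | succ k => simp [sumι_π_same n _ k]

lemma sumι_π_ne : ∀ (n : ℕ) (f : Fin n → C) (i j : Fin n), i ≠ j →
    sumι n f i ≫ sumπ n f j = 0
  | 0, _, i, _, _ => i.elim0
  | (n + 1), f, i, j, hij => by
      induction i using Fin.cases with
      | zero =>
          induction j using Fin.cases with
          | zero => exact absurd rfl hij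
          | succ l => simp
      | succ k =>
          induction j using Fin.cases with
          | zero => simp
          | succ l =>
              have : k ≠ l := fun h => hij (by rw [h])
              simp [sumι_π_ne n _ k l this]

lemma sum_total : ∀ (n : ℕ) (f : Fin n → C),
    (∑ i, sumπ n f i ≫ sumι n f i) = 𝟙 (sumObj n f)
  | 0, f => (isZero_zero C).eq_of_src _ _
  | (n + 1), f => by
      rw [Fin.sum_univ_succ]
      have : ∀ k : Fin n, sumπ (n+1) f k.succ ≫ sumι (n+1) f k.succ
          = biprod.snd ≫ (sumπ n (fun i => f i.succ) k ≫ sumι n (fun i => f i.succ) k)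
            ≫ biprod.inr := by
        intro k; simp
      rw [Finset.sum_congr rfl (fun k _ => this k)]
      rw [← Preadditive.comp_sum, ← Preadditive.sum_comp, sum_total n _]
      simp only [sumπ_zero, sumι_zero, Category.comp_id, Category.id_comp]
      show biprod.fst ≫ biprod.inl + biprod.snd ≫ biprod.inr
          = 𝟙 (f 0 ⊞ sumObj n (fun i => f i.succ))
      exact biprod.total

lemma addClosure_biprod {D : Set C} {X Y : C} (hX : addClosure D X) (hY : addClosure D Y) :
    addClosure D (X ⊞ Y) :=
  .sum hX hY ⟨biprod.fst, biprod.snd, biprod.inl, biprod.inr, by simp, by simp, biprod.total⟩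

lemma addClosure_sumObj {D : Set C} : ∀ (n : ℕ) (f : Fin n → C),
    (∀ i, addClosure D (f i)) → addClosure D (sumObj n f)
  | 0, f, _ => .zero (isZero_zero C)
  | (n + 1), f, h =>
      addClosure_biprod (h 0) (addClosure_sumObj n _ (fun k => h k.succ))

end Aux

set_option maxHeartbeats 1000000 in
/-- A matrix all of whose entries (w.r.t. a decomposition into objects with local
endomorphism rings) are non-isomorphisms is "radical": `𝟙 - v` is invertible. -/
lemma isIso_one_sub_of_entries : ∀ (n : ℕ) (f : Fin n → C), (∀ i, LocEnd (f i)) →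
    ∀ (v : sumObj n f ⟶ sumObj n f),
    (∀ i j, ¬ IsIso (sumι n f i ≫ v ≫ sumπ n f j)) → IsIso (𝟙 (sumObj n f) - v)
  | 0, f, _, v, _ => by
      have : 𝟙 (sumObj 0 f) - v = 𝟙 (sumObj 0 f) := (isZero_zero C).eq_of_src _ _
      rw [this]; infer_instance
  | (n + 1), f, hloc, v, hv => by
      set f' : Fin n → C := fun i => f i.succ with hf'
      have hloc' : ∀ i, LocEnd (f' i) := fun i => hloc i.succ
      set A : f 0 ⟶ f 0 := biprod.inl ≫ v ≫ biprod.fst with hA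
      set B : f 0 ⟶ sumObj n f' := biprod.inl ≫ v ≫ biprod.snd with hB
      set Cm : sumObj n f' ⟶ f 0 := biprod.inr ≫ v ≫ biprod.fst with hCm
      set D : sumObj n f' ⟶ sumObj n f' := biprod.inr ≫ v ≫ biprod.snd with hD
      have hAni : ¬ IsIso A := by
        have := hv 0 0
        simpa using this
      have hiA : IsIso (𝟙 (f 0) - A) := (hloc 0 A).resolve_left hAni
      have hvt : ∀ k l : Fin n,
          ¬ IsIso (sumι n f' k ≫ (D + Cm ≫ inv (𝟙 (f 0) - A) ≫ B) ≫ sumπ n f' l) := by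
        intro k l
        have hent : sumι n f' k ≫ (D + Cm ≫ inv (𝟙 (f 0) - A) ≫ B) ≫ sumπ n f' l
            = (sumι (n+1) f k.succ ≫ v ≫ sumπ (n+1) f l.succ)
              + ((sumι (n+1) f k.succ ≫ v ≫ sumπ (n+1) f 0)
                  ≫ (inv (𝟙 (f 0) - A) ≫ (B ≫ sumπ n f' l))) := by
          simp [hD, hCm, Preadditive.comp_add, Preadditive.add_comp, Category.assoc] <;> rfl
        rw [hent]
        have h1 : 𝟙 (f' k) ≠ 0 := id_ne_zero_of_not_isIso (hv k.succ k.succ)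
        refine not_isIso_add (hloc' k) (hloc' l) (hv k.succ l.succ) ?_ h1
        exact not_isIso_comp_left (hloc 0) (hv k.succ 0) h1 _
      have hS : IsIso (𝟙 (sumObj n f') - (D + Cm ≫ inv (𝟙 (f 0) - A) ≫ B)) :=
        isIso_one_sub_of_entries n f' hloc' _ hvt
      have hMeq : 𝟙 (f 0 ⊞ sumObj n f') - v
          = biprod.desc (biprod.lift (𝟙 (f 0) - A) (-B)) (biprod.lift (-Cm) (𝟙 _ - D)) := by
        apply biprod.hom_ext' <;> apply biprod.hom_ext <;>
          simp [hA, hB, hCm, hD, Preadditive.comp_sub, Preadditive.sub_comp] <;> rfl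
      show IsIso (𝟙 (f 0 ⊞ sumObj n f') - v)
      rw [hMeq]
      haveI : IsIso (𝟙 (f 0) - A) := hiA
      have hS' : IsIso ((𝟙 _ - D) - (-Cm) ≫ inv (𝟙 (f 0) - A) ≫ (-B)) := by
        have : (𝟙 _ - D) - (-Cm) ≫ inv (𝟙 (f 0) - A) ≫ (-B)
            = 𝟙 (sumObj n f') - (D + Cm ≫ inv (𝟙 (f 0) - A) ≫ B) := by
          simp only [Preadditive.neg_comp, Preadditive.comp_neg, neg_neg]
          abel
        rw [this]; exact hS
      exact isIso_binaryMatrix (𝟙 (f 0) - A) (-B) (-Cm) (𝟙 _ - D) hS'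

/-- Transport of the previous lemma to a (non-orthogonal) "system" of retractions. -/
lemma isIso_one_sub_of_entries_system {X : C} (n : ℕ) (f : Fin n → C)
    (p : ∀ i, X ⟶ f i) (ι : ∀ i, f i ⟶ X)
    (hpι : ∀ i, ι i ≫ p i = 𝟙 (f i)) (htot : (∑ i, p i ≫ ι i) = 𝟙 X)
    (hloc : ∀ i, LocEnd (f i)) (v : X ⟶ X)
    (hv : ∀ i j, ¬ IsIso (ι i ≫ v ≫ p j)) : IsIso (𝟙 X - v) := by
  set s : X ⟶ sumObj n f := ∑ i, p i ≫ sumι n f i with hs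
  set r : sumObj n f ⟶ X := ∑ i, sumπ n f i ≫ ι i with hr
  have hιr : ∀ i, sumι n f i ≫ r = ι i := by
    intro i
    rw [hr, Preadditive.comp_sum]
    rw [Finset.sum_eq_single i]
    · rw [← Category.assoc, sumι_π_same, Category.id_comp]
    · intro j _ hj
      rw [← Category.assoc, sumι_π_ne n f i j (Ne.symm hj), zero_comp]
    · intro h; exact absurd (Finset.mem_univ i) h
  have hsπ : ∀ j, s ≫ sumπ n f j = p j := by
    intro j
    rw [hs, Preadditive.sum_comp]
    rw [Finset.sum_eq_single j]
    · rw [Category.assoc, sumι_π_same, Category.comp_id]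
    · intro i _ hi
      rw [Category.assoc, sumι_π_ne n f i j hi, comp_zero]
    · intro h; exact absurd (Finset.mem_univ j) h
  have hsr : s ≫ r = 𝟙 X := by
    rw [hs, Preadditive.sum_comp]
    have : ∀ i : Fin n, (p i ≫ sumι n f i) ≫ r = p i ≫ ι i := by
      intro i; rw [Category.assoc, hιr]
    rw [Finset.sum_congr rfl (fun i _ => this i), htot]
  set vt : sumObj n f ⟶ sumObj n f := r ≫ v ≫ s with hvt
  have hW : IsIso (𝟙 (sumObj n f) - vt) := by
    apply isIso_one_sub_of_entries n f hloc
    intro i j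
    have : sumι n f i ≫ vt ≫ sumπ n f j = ι i ≫ v ≫ p j := by
      rw [hvt]
      rw [show sumι n f i ≫ (r ≫ v ≫ s) ≫ sumπ n f j
          = (sumι n f i ≫ r) ≫ v ≫ (s ≫ sumπ n f j) by simp [Category.assoc]]
      rw [hιr, hsπ]
    rw [this]; exact hv i j
  have hvs : v ≫ s = s ≫ vt := by
    rw [hvt, ← Category.assoc, ← Category.assoc, hsr, Category.id_comp]
  have hrv : r ≫ v = vt ≫ r := by
    rw [hvt, Category.assoc, Category.assoc, hsr, Category.comp_id]
  refine ⟨s ≫ inv (𝟙 _ - vt) ≫ r, ?_, ?_⟩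
  · rw [Preadditive.sub_comp, Category.id_comp]
    rw [show v ≫ s ≫ inv (𝟙 _ - vt) ≫ r = (v ≫ s) ≫ inv (𝟙 _ - vt) ≫ r by simp, hvs]
    rw [show (s ≫ vt) ≫ inv (𝟙 _ - vt) ≫ r = s ≫ (vt ≫ inv (𝟙 _ - vt)) ≫ r by simp]
    rw [show s ≫ inv (𝟙 _ - vt) ≫ r - s ≫ (vt ≫ inv (𝟙 _ - vt)) ≫ r
        = s ≫ ((𝟙 _ - vt) ≫ inv (𝟙 _ - vt)) ≫ r by
      simp only [Preadditive.sub_comp, Preadditive.comp_sub, Category.id_comp]]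
    rw [IsIso.hom_inv_id, Category.id_comp, hsr]
  · rw [Preadditive.comp_sub, Category.comp_id]
    rw [show (s ≫ inv (𝟙 _ - vt) ≫ r) ≫ v = s ≫ inv (𝟙 _ - vt) ≫ (r ≫ v) by simp, hrv]
    rw [show s ≫ inv (𝟙 _ - vt) ≫ vt ≫ r = s ≫ (inv (𝟙 _ - vt) ≫ vt) ≫ r by simp]
    rw [show s ≫ inv (𝟙 _ - vt) ≫ r - s ≫ (inv (𝟙 _ - vt) ≫ vt) ≫ r
        = s ≫ (inv (𝟙 _ - vt) ≫ (𝟙 _ - vt)) ≫ r by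
      simp only [Preadditive.sub_comp, Preadditive.comp_sub, Category.comp_id,
        Preadditive.comp_sub, Category.assoc]]
    rw [IsIso.inv_hom_id, Category.id_comp, hsr]

/-- From any right `R`-approximation of `Z` whose source carries a Krull-Schmidt
decomposition, one can extract a *right minimal* right `R`-approximation. -/
lemma exists_minimal_approx (R : Set C) (haddR : AddClosed R) (Z : C) :
    ∀ n : ℕ, ∀ X' : C, X' ∈ R → ∀ c' : X' ⟶ Z,
    (∀ X'' ∈ R, ∀ g : X'' ⟶ Z, ∃ w : X'' ⟶ X', w ≫ c' = g) →
    (∃ (f : Fin n → C) (p : ∀ i, X' ⟶ f i) (ι : ∀ i, f i ⟶ X'),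
      (∀ i, ι i ≫ p i = 𝟙 (f i)) ∧ (∑ i, p i ≫ ι i) = 𝟙 X' ∧ (∀ i, LocEnd (f i))) →
    ∃ (X₀ : C), X₀ ∈ R ∧ ∃ c₀ : X₀ ⟶ Z,
      (∀ X'' ∈ R, ∀ g : X'' ⟶ Z, ∃ w : X'' ⟶ X₀, w ≫ c₀ = g) ∧
      (∀ u : X₀ ⟶ X₀, u ≫ c₀ = c₀ → IsIso u) := by
  intro n
  induction n using Nat.strong_induction_on with
  | _ n IH =>
    rintro X' hX' c' happx ⟨f, p, ι, hpι, htot, hloc⟩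
    by_cases hcase : ∃ u : X' ⟶ X', u ≫ c' = c' ∧ ∃ i j, IsIso (ι i ≫ (𝟙 X' - u) ≫ p j)
    · obtain ⟨u, hu, i, j, hiso⟩ := hcase
      have hn : n ≠ 0 := fun h => (h ▸ i).elim0
      obtain ⟨m, rfl⟩ := Nat.exists_eq_succ_of_ne_zero hn
      -- pivot elimination: pass to the complement of the `j`-th summand
      set v : X' ⟶ X' := 𝟙 X' - u with hv
      have hvc : v ≫ c' = 0 := by
        rw [hv, Preadditive.sub_comp, Category.id_comp, hu, sub_self]
      set f₀ : Fin m → C := fun k => f (j.succAbove k) with hf₀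
      set X₀ : C := sumObj m f₀ with hX₀def
      have hmem : X₀ ∈ R := by
        apply haddR
        apply addClosure_sumObj
        intro k
        exact .smd (.of hX') ⟨ι (j.succAbove k), p (j.succAbove k), hpι _⟩
      set c₀ : X₀ ⟶ Z := ∑ k, sumπ m f₀ k ≫ ι (j.succAbove k) ≫ c' with hc₀
      have hkc : ∀ k, sumι m f₀ k ≫ c₀ = ι (j.succAbove k) ≫ c' := by
        intro k
        rw [hc₀, Preadditive.comp_sum]
        rw [Finset.sum_eq_single k]
        · rw [← Category.assoc, sumι_π_same, Category.id_comp]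
        · intro l _ hl
          rw [← Category.assoc, sumι_π_ne m f₀ k l (Ne.symm hl), zero_comp]
        · intro h; exact absurd (Finset.mem_univ k) h
      -- c' factors through c₀
      set φ : X' ⟶ X₀ :=
        ∑ k, (p (j.succAbove k)
          - p j ≫ inv (ι i ≫ v ≫ p j) ≫ (ι i ≫ v ≫ p (j.succAbove k))) ≫ sumι m f₀ k
        with hφ
      have hφc : φ ≫ c₀ = c' := by
        rw [hφ, Preadditive.sum_comp]
        have h1 : ∀ k, ((p (j.succAbove k)
            - p j ≫ inv (ι i ≫ v ≫ p j) ≫ (ι i ≫ v ≫ p (j.succAbove k))) ≫ sumι m f₀ k) ≫ c₀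
            = p (j.succAbove k) ≫ ι (j.succAbove k) ≫ c'
              - p j ≫ inv (ι i ≫ v ≫ p j)
                ≫ ((ι i ≫ v ≫ p (j.succAbove k)) ≫ (ι (j.succAbove k) ≫ c')) := by
          intro k
          rw [Category.assoc, hkc k, Preadditive.sub_comp]
          simp only [Category.assoc]
        rw [Finset.sum_congr rfl (fun k _ => h1 k), Finset.sum_sub_distrib]
        have h2 : (∑ k, p j ≫ inv (ι i ≫ v ≫ p j)
            ≫ ((ι i ≫ v ≫ p (j.succAbove k)) ≫ (ι (j.succAbove k) ≫ c')))
            = p j ≫ inv (ι i ≫ v ≫ p j)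
              ≫ ∑ k, ((ι i ≫ v ≫ p (j.succAbove k)) ≫ (ι (j.succAbove k) ≫ c')) := by
          rw [Preadditive.comp_sum, Preadditive.comp_sum]
        have h3 : (∑ a, ((ι i ≫ v ≫ p a) ≫ (ι a ≫ c'))) = 0 := by
          have hh : ∀ a, ((ι i ≫ v ≫ p a) ≫ (ι a ≫ c')) = ι i ≫ v ≫ ((p a ≫ ι a) ≫ c') := by
            intro a; simp only [Category.assoc]
          rw [Finset.sum_congr rfl (fun a _ => hh a), ← Preadditive.comp_sum,
            ← Preadditive.comp_sum, ← Preadditive.sum_comp, htot, Category.id_comp, hvc,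
            comp_zero]
        have h4 : (∑ k, ((ι i ≫ v ≫ p (j.succAbove k)) ≫ (ι (j.succAbove k) ≫ c')))
            = - ((ι i ≫ v ≫ p j) ≫ (ι j ≫ c')) := by
          have h5 := Fin.sum_univ_succAbove (fun a => ((ι i ≫ v ≫ p a) ≫ (ι a ≫ c'))) j
          rw [h3] at h5
          exact neg_eq_of_add_eq_zero_right h5.symm |>.symm
        rw [h2, h4]
        simp only [Preadditive.comp_neg, sub_neg_eq_add, IsIso.inv_hom_id_assoc]
        have h6 := Fin.sum_univ_succAbove (fun a => p a ≫ (ι a ≫ c')) j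
        have h7 : (∑ a, p a ≫ (ι a ≫ c')) = c' := by
          have hh : ∀ a, p a ≫ (ι a ≫ c') = (p a ≫ ι a) ≫ c' := by
            intro a; simp only [Category.assoc]
          rw [Finset.sum_congr rfl (fun a _ => hh a), ← Preadditive.sum_comp, htot,
            Category.id_comp]
        rw [h7] at h6
        conv_rhs => rw [h6]
        abel
      have happx₀ : ∀ X'' ∈ R, ∀ g : X'' ⟶ Z, ∃ w : X'' ⟶ X₀, w ≫ c₀ = g := by
        intro X'' h g
        obtain ⟨w, hw⟩ := happx X'' h g
        exact ⟨w ≫ φ, by rw [Category.assoc, hφc, hw]⟩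
      exact IH m (Nat.lt_succ_self m) X₀ hmem c₀ happx₀
        ⟨f₀, sumπ m f₀, sumι m f₀, sumι_π_same m f₀, sum_total m f₀,
          fun k => hloc (j.succAbove k)⟩
    · push_neg at hcase
      refine ⟨X', hX', c', happx, ?_⟩
      intro u hu
      have hent := hcase u hu
      have := isIso_one_sub_of_entries_system n f p ι hpι htot hloc (𝟙 X' - u) hent
      rwa [sub_sub_cancel] at this

lemma shift_hom_vanish {R : Set C} (hrig : Rigid R) {A Y : C} (hA : A ∈ R)
    (hY : Y ∈ shiftSet R 1) (w : A ⟶ Y) : w = 0 := by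
  obtain ⟨B, hB, ⟨e⟩⟩ := hY
  have h0 := hrig hA hB (w ≫ e.hom)
  calc w = (w ≫ e.hom) ≫ e.inv := by simp
    _ = 0 := by rw [h0, zero_comp]

lemma star_summandClosed (hKS : KrullSchmidtCat C) (R : Set C) (hrig : Rigid R)
    (haddR : AddClosed R) : SummandClosed (star R (shiftSet R 1)) := by
  intro Z M hM hdata
  obtain ⟨sec, ret, hsr⟩ := hdata
  obtain ⟨A, B, fA, gB, hB, hAmem, hBmem, hT⟩ := hM
  have happroxM : ∀ X'' ∈ R, ∀ w : X'' ⟶ M, ∃ a : X'' ⟶ A, w = a ≫ fA := by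
    intro X'' h w
    exact Triangle.coyoneda_exact₂ _ hT w (shift_hom_vanish hrig h hBmem (w ≫ gB))
  have happroxZ : ∀ X'' ∈ R, ∀ g : X'' ⟶ Z, ∃ w : X'' ⟶ A, w ≫ (fA ≫ ret) = g := by
    intro X'' h g
    obtain ⟨a, ha⟩ := happroxM X'' h (g ≫ sec)
    refine ⟨a, ?_⟩
    rw [← Category.assoc, ← ha, Category.assoc, hsr, Category.comp_id]
  obtain ⟨n, f, p, ι, h1, h2, h3⟩ := hKS A
  obtain ⟨X₀, hX₀, c₀, happrox₀, hmin⟩ := exists_minimal_approx R haddR Z n A hAmem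
    (fA ≫ ret) happroxZ ⟨f, p, ι, h1, h2, h3⟩
  obtain ⟨Y', g', h', hT'⟩ := distinguished_cocone_triangle c₀
  obtain ⟨sA, hsA⟩ := happroxM X₀ hX₀ (c₀ ≫ sec)
  obtain ⟨tA, htA⟩ := happrox₀ A hAmem (fA ≫ ret)
  have hu : (sA ≫ tA) ≫ c₀ = c₀ := by
    rw [Category.assoc, htA, ← Category.assoc, ← hsA, Category.assoc, hsr, Category.comp_id]
  have huiso : IsIso (sA ≫ tA) := hmin _ hu
  let φ₁ : Triangle.mk c₀ g' h' ⟶ Triangle.mk fA gB hB :=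
    completeDistinguishedTriangleMorphism _ _ hT' hT sA sec hsA
  let φ₂ : Triangle.mk fA gB hB ⟶ Triangle.mk c₀ g' h' :=
    completeDistinguishedTriangleMorphism _ _ hT hT' tA ret htA.symm
  have h12 : IsIso ((φ₁ ≫ φ₂).hom₃) := by
    apply isIso₃_of_isIso₁₂ (φ₁ ≫ φ₂) hT' hT'
    · have : (φ₁ ≫ φ₂).hom₁ = sA ≫ tA := rfl
      rw [this]; exact huiso
    · have : (φ₁ ≫ φ₂).hom₂ = sec ≫ ret := rfl
      rw [this, hsr]
      exact IsIso.id Z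
  have hρ : IsIso (φ₁.hom₃ ≫ φ₂.hom₃) := h12
  set y₁ : Y' ⟶ B := φ₁.hom₃ with hy₁
  set y₂ : B ⟶ Y' := φ₂.hom₃ with hy₂
  haveI hρ' : IsIso (y₁ ≫ y₂) := hρ
  obtain ⟨R₁, hR₁, ⟨e⟩⟩ := hBmem
  have hyy : (y₁ ≫ e.hom) ≫ (e.inv ≫ y₂ ≫ inv (y₁ ≫ y₂)) = 𝟙 Y' := by
    rw [Category.assoc, Iso.hom_inv_id_assoc]
    exact (Category.assoc _ _ _).symm.trans (IsIso.hom_inv_id (y₁ ≫ y₂))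
  have hW : (shiftFunctor C (-1 : ℤ)).obj Y' ∈ R := by
    apply haddR
    refine .smd (.of hR₁)
      ⟨(shiftFunctor C (-1 : ℤ)).map (y₁ ≫ e.hom)
          ≫ (shiftFunctorCompIsoId C (1 : ℤ) (-1 : ℤ) (by ring)).hom.app R₁,
        (shiftFunctorCompIsoId C (1 : ℤ) (-1 : ℤ) (by ring)).inv.app R₁
          ≫ (shiftFunctor C (-1 : ℤ)).map (e.inv ≫ y₂ ≫ inv (y₁ ≫ y₂)), ?_⟩
    rw [Category.assoc, Iso.hom_inv_id_app_assoc, ← Functor.map_comp, hyy, CategoryTheory.Functor.map_id]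
  have hY' : Y' ∈ shiftSet R 1 :=
    ⟨(shiftFunctor C (-1 : ℤ)).obj Y', hW,
      ⟨((shiftFunctorCompIsoId C (-1 : ℤ) (1 : ℤ) (by ring)).app Y').symm⟩⟩
  exact ⟨X₀, Y', c₀, g', h', hX₀, hY', hT'⟩

lemma addClosure_prodBool {D : Set C} (f : Bool → C) (h : ∀ b, addClosure D (f b)) :
    addClosure D (∏ᶜ f) :=
  .sum (h true) (h false)
    ⟨Pi.π f true, Pi.π f false,
      Pi.lift (fun b => Bool.rec (0 : f true ⟶ f false) (𝟙 (f true)) b),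
      Pi.lift (fun b => Bool.rec (𝟙 (f false)) (0 : f false ⟶ f true) b),
      by simp, by simp,
      by
        apply Pi.hom_ext
        intro b
        cases b <;> simp [Preadditive.add_comp]⟩

theorem statement_1 (hKS : KrullSchmidtCat C) (R : Set C)
    (hrig : Rigid R) (haddR : AddClosed R) :
    SumClosed (star R (shiftSet R 1)) ∧ SummandClosed (star R (shiftSet R 1)) ∧
      IsoClosed (star R (shiftSet R 1)) := by
  have hsummand : SummandClosed (star R (shiftSet R 1)) :=
    star_summandClosed hKS R hrig haddR
  have hiso : IsoClosed (star R (shiftSet R 1)) := by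
    rintro M N ⟨A, B, fA, gB, hB, hAm, hBm, hT⟩ ⟨e⟩
    refine ⟨A, B, fA ≫ e.hom, e.inv ≫ gB, hB, hAm, hBm, ?_⟩
    refine isomorphic_distinguished _ hT _ ?_
    refine Triangle.isoMk _ _ (Iso.refl _) e.symm (Iso.refl _) ?_ ?_ ?_ <;> simp
    show hB ≫ (shiftFunctor C 1).map (𝟙 A) = 𝟙 B ≫ hB
    rw [CategoryTheory.Functor.map_id, Category.comp_id, Category.id_comp]
    case refine_1 =>
      show (fA ≫ e.hom) ≫ e.inv = 𝟙 A ≫ fA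
      simp
    case refine_2 =>
      show (e.inv ≫ gB) ≫ 𝟙 B = e.inv ≫ gB
      simp
  have hsum : SumClosed (star R (shiftSet R 1)) := by
    rintro X Y Z hX hY ⟨pX, pY, iX, iY, hiX, hiY, htot⟩
    obtain ⟨A₁, B₁, f₁, g₁, h₁, hA₁, hB₁, hT₁⟩ := hX
    obtain ⟨A₂, B₂, f₂, g₂, h₂, hA₂, hB₂, hT₂⟩ := hY
    set Tf : Bool → Triangle C :=
      fun b => cond b (Triangle.mk f₁ g₁ h₁) (Triangle.mk f₂ g₂ h₂) with hTfdef
    have hTfd : ∀ b, Tf b ∈ distTriang C := by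
      intro b; cases b
      · exact hT₂
      · exact hT₁
    have hdist := productTriangle_distinguished Tf hTfd
    have hmem1 : (∏ᶜ fun b => (Tf b).obj₁) ∈ R := by
      apply haddR; apply addClosure_prodBool
      intro b; cases b
      · exact .of hA₂
      · exact .of hA₁
    obtain ⟨R₁, hR₁, ⟨e₁⟩⟩ := hB₁
    obtain ⟨R₂, hR₂, ⟨e₂⟩⟩ := hB₂
    set Rf : Bool → C := fun b => cond b R₁ R₂ with hRfdef
    have hWmem : (∏ᶜ Rf) ∈ R := by
      apply haddR; apply addClosure_prodBool
      intro b; cases b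
      · exact .of hR₂
      · exact .of hR₁
    have e3 : ∀ b, (Tf b).obj₃ ≅ (shiftFunctor C (1 : ℤ)).obj (Rf b) := by
      intro b; cases b
      · exact e₂
      · exact e₁
    have hiso3 : (∏ᶜ fun b => (Tf b).obj₃) ∈ shiftSet R 1 := by
      refine ⟨∏ᶜ Rf, hWmem, ⟨?_⟩⟩
      exact (Pi.mapIso e3) ≪≫ (asIso (piComparison (shiftFunctor C (1 : ℤ)) Rf)).symm
    have hP : (∏ᶜ fun b => (Tf b).obj₂) ∈ star R (shiftSet R 1) :=
      ⟨_, _, (productTriangle Tf).mor₁, (productTriangle Tf).mor₂,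
        (productTriangle Tf).mor₃, hmem1, hiso3, hdist⟩
    refine hsummand hP
      ⟨Pi.lift (fun b => Bool.rec pY pX b), Pi.π _ true ≫ iX + Pi.π _ false ≫ iY, ?_⟩
    have ha : Pi.lift (fun b => Bool.rec pY pX b) ≫ Pi.π (fun b => (Tf b).obj₂) true = pX := by
      simp <;> rfl
    have hb : Pi.lift (fun b => Bool.rec pY pX b) ≫ Pi.π (fun b => (Tf b).obj₂) false = pY := by
      simp <;> rfl
    rw [Preadditive.comp_add]
    refine Eq.trans ?_ htot
    exact congrArg₂ (· + ·)
      ((Category.assoc _ _ _).symm.trans (congrArg (fun g : Z ⟶ X => g ≫ iX) ha))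
      ((Category.assoc _ _ _).symm.trans (congrArg (fun g : Z ⟶ Y => g ≫ iY) hb))
  exact ⟨hsum, hsummand, hiso⟩

end RelCT
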